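/- Let γ > 1, let A, B: ℝ → (0,∞) be C¹ functions, let Ω ⊆ ℝ² be open, and let (m, p, ρ) be a C¹ solution of the steady full Euler equations on Ω with ρ > 0. Suppose ψ ∈ C²(Ω) is a stream function for the flow, i.e. ψ_{x₁} = −m₂ and ψ_{x₂} = m₁ on Ω, that ∇ψ is nowhere zero, and that the constitutive relations p = ((γ−1)/γ) A(ψ) ρ^γ and |m|²/(2ρ²) + γp/((γ−1)ρ) = B(ψ) hold on Ω, with ρ lying on the subsonic branch ρ^{γ−1} > 2B(ψ)/((γ+1)A(ψ)). Then ψ satisfies the reduced elliptic equation Σ_{i,j} a_{ij}(ψ,∇ψ) ψ_{x_i x_j} = F(ψ,∇ψ) on Ω. -/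

import Mathlib

open Set
open scoped ENNReal NNReal

noncomputable section

abbrev E2 : Type := EuclideanSpace ℝ (Fin 2)

/-- The point `(a, b)` of the Euclidean plane. -/
def pt (a b : ℝ) : E2 := (WithLp.equiv 2 (Fin 2 → ℝ)).symm ![a, b]

/-- Partial derivative in the `i`-th coordinate direction. -/
def pd (i : Fin 2) (f : E2 → ℝ) : E2 → ℝ :=
  fun x => fderiv ℝ f x (EuclideanSpace.single i 1)

/-- Iterated mixed partial derivative `∂₁^{k₁} ∂₂^{k₂} f`. -/
def Dmix (k₁ k₂ : ℕ) (f : E2 → ℝ) : E2 → ℝ := (pd 0)^[k₁] ((pd 1)^[k₂] f)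

/-- The steady full Euler equations on `Ω`: conservation of mass, the two momentum
equations, and conservation of energy, with `E = |m|²/(2ρ²) + p/((γ-1)ρ)`. -/
def EulerEqs (γ : ℝ) (Ω : Set E2) (m₁ m₂ p ρ : E2 → ℝ) : Prop :=
  ∀ x ∈ Ω,
    pd 0 m₁ x + pd 1 m₂ x = 0 ∧
    pd 0 (fun y => m₁ y ^ 2 / ρ y) x + pd 1 (fun y => m₁ y * m₂ y / ρ y) x + pd 0 p x = 0 ∧
    pd 0 (fun y => m₁ y * m₂ y / ρ y) x + pd 1 (fun y => m₂ y ^ 2 / ρ y) x + pd 1 p x = 0 ∧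
    pd 0 (fun y => m₁ y *
        ((m₁ y ^ 2 + m₂ y ^ 2) / (2 * ρ y ^ 2) + p y / ((γ - 1) * ρ y) + p y / ρ y)) x +
      pd 1 (fun y => m₂ y *
        ((m₁ y ^ 2 + m₂ y ^ 2) / (2 * ρ y ^ 2) + p y / ((γ - 1) * ρ y) + p y / ρ y)) x = 0

/-- `ρ` is the subsonic-branch solution of the Bernoulli relation
`½|∇ψ|² = B(ψ)ρ² - A(ψ)ρ^{γ+1}` at the point `x`. -/
def BernoulliBranch (γ : ℝ) (A B : ℝ → ℝ) (ψ : E2 → ℝ) (ρ : ℝ) (x : E2) : Prop :=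
  0 < ρ ∧ 2 * B (ψ x) / ((γ + 1) * A (ψ x)) < ρ ^ (γ - 1) ∧
    (pd 0 ψ x ^ 2 + pd 1 ψ x ^ 2) / 2 = B (ψ x) * ρ ^ 2 - A (ψ x) * ρ ^ (γ + 1)

/-- The nondivergence-form reduced equation
`Σ_{i,j} a_{ij}(ψ,∇ψ) ψ_{x_i x_j} = F(ψ,∇ψ)` at the point `x`, with density value `ρ`. -/
def NonDivEq (γ : ℝ) (A B : ℝ → ℝ) (ψ : E2 → ℝ) (ρ : ℝ) (x : E2) : Prop :=
  ((γ - 1) * A (ψ x) * ρ ^ (γ + 1) - pd 1 ψ x ^ 2) * pd 0 (pd 0 ψ) x +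
      pd 0 ψ x * pd 1 ψ x * (pd 0 (pd 1 ψ) x + pd 1 (pd 0 ψ) x) +
      ((γ - 1) * A (ψ x) * ρ ^ (γ + 1) - pd 0 ψ x ^ 2) * pd 1 (pd 1 ψ) x =
    ((γ - 1) / γ) * ρ ^ (γ + 3) *
      (γ * A (ψ x) * deriv B (ψ x) - 2 * deriv A (ψ x) * B (ψ x) +
        A (ψ x) * deriv A (ψ x) * ρ ^ (γ - 1))

/-- The reduced elliptic equation for the stream function on `Ω`: at every point the
Bernoulli relation is solvable on the subsonic branch and, with that density,
the equation `a_{ij}(ψ,∇ψ) ψ_{x_i x_j} = F(ψ,∇ψ)` holds. -/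
def ReducedEq (γ : ℝ) (A B : ℝ → ℝ) (Ω : Set E2) (ψ : E2 → ℝ) : Prop :=
  ∀ x ∈ Ω, ∃ ρ : ℝ, BernoulliBranch γ A B ψ ρ x ∧ NonDivEq γ A B ψ ρ x


section PDHelpers
variable {f g : E2 → ℝ} {x : E2} {i : Fin 2}

lemma pd_congr (h : f =ᶠ[nhds x] g) : pd i f x = pd i g x := by
  unfold pd; rw [h.fderiv_eq]

lemma pd_add (hf : DifferentiableAt ℝ f x) (hg : DifferentiableAt ℝ g x) :
    pd i (fun y => f y + g y) x = pd i f x + pd i g x := by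
  unfold pd; rw [fderiv_fun_add hf hg]; simp

lemma pd_neg : pd i (fun y => -f y) x = - pd i f x := by
  unfold pd; rw [fderiv_fun_neg]; simp

lemma pd_mul (hf : DifferentiableAt ℝ f x) (hg : DifferentiableAt ℝ g x) :
    pd i (fun y => f y * g y) x = pd i f x * g x + f x * pd i g x := by
  unfold pd; rw [fderiv_fun_mul hf hg]; simp [smul_eq_mul]; ring

lemma pd_const_mul (c : ℝ) (hf : DifferentiableAt ℝ f x) :
    pd i (fun y => c * f y) x = c * pd i f x := by
  unfold pd; rw [fderiv_const_mul hf]; simp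

lemma pd_comp (g : ℝ → ℝ) (hg : DifferentiableAt ℝ g (f x)) (hf : DifferentiableAt ℝ f x) :
    pd i (fun y => g (f y)) x = deriv g (f x) * pd i f x := by
  unfold pd
  have : (fun y => g (f y)) = g ∘ f := rfl
  rw [this, fderiv_comp x hg hf]
  simp only [ContinuousLinearMap.coe_comp', Function.comp_apply]
  have h2 : fderiv ℝ g (f x) (fderiv ℝ f x (EuclideanSpace.single i 1))
      = (fderiv ℝ f x (EuclideanSpace.single i 1)) * deriv g (f x) := by
    rw [← fderiv_apply_one_eq_deriv]
    rw [show fderiv ℝ f x (EuclideanSpace.single i 1)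
        = (fderiv ℝ f x (EuclideanSpace.single i 1)) • (1:ℝ) by simp]
    rw [map_smul]; simp [smul_eq_mul]
  rw [h2]; ring

lemma pd_inv (hg : DifferentiableAt ℝ g x) (hg0 : g x ≠ 0) :
    pd i (fun y => (g y)⁻¹) x = -(pd i g x) / g x ^ 2 := by
  have h := pd_comp (i := i) (f := g) (fun t : ℝ => t⁻¹) (differentiableAt_inv hg0) hg
  rw [deriv_inv] at h
  rw [h]; field_simp

lemma pd_div (hf : DifferentiableAt ℝ f x) (hg : DifferentiableAt ℝ g x) (hg0 : g x ≠ 0) :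
    pd i (fun y => f y / g y) x = (pd i f x * g x - f x * pd i g x) / g x ^ 2 := by
  have h : (fun y => f y / g y) = fun y => f y * (g y)⁻¹ := by ext y; rw [div_eq_mul_inv]
  rw [h, pd_mul (g := fun y => (g y)⁻¹) hf (hg.inv hg0), pd_inv hg hg0]
  field_simp; ring

lemma pd_sq (hf : DifferentiableAt ℝ f x) :
    pd i (fun y => f y ^ 2) x = 2 * f x * pd i f x := by
  have h : (fun y => f y ^ 2) = fun y => f y * f y := by ext y; ring
  rw [h, pd_mul hf hf]; ring


lemma pd_rpow (c : ℝ) (hf : DifferentiableAt ℝ f x) (h0 : f x ≠ 0) :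
    pd i (fun y => f y ^ c) x = c * f x ^ (c - 1) * pd i f x := by
  unfold pd
  rw [(hf.hasFDerivAt.rpow_const (Or.inl h0)).fderiv]
  simp [smul_eq_mul]
  try ring

lemma DifferentiableAt.div'' (hf : DifferentiableAt ℝ f x) (hg : DifferentiableAt ℝ g x)
    (h0 : g x ≠ 0) : DifferentiableAt ℝ (fun y => f y / g y) x := by
  simp only [div_eq_mul_inv]; exact hf.mul (hg.inv h0)
end PDHelpers

/-- the reduction in Section 3 of the paper. If `(m, p, ρ)` is a
`C¹` Euler flow with stream function `ψ ∈ C²` (`ψ_{x₁} = -m₂`, `ψ_{x₂} = m₁`),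
`∇ψ` nowhere zero, satisfying the constitutive relations `p = ((γ-1)/γ)A(ψ)ρ^γ`
and `|m|²/(2ρ²) + γp/((γ-1)ρ) = B(ψ)` with `ρ` on the subsonic branch, then `ψ`
satisfies the reduced elliptic equation `a_{ij}(ψ,∇ψ)ψ_{x_ix_j} = F(ψ,∇ψ)` on `Ω`. -/

theorem euler_solution_gives_reduced_equation
    (γ : ℝ) (hγ : 1 < γ) (A B : ℝ → ℝ)
    (hA : ContDiff ℝ 1 A) (hB : ContDiff ℝ 1 B)
    (hApos : ∀ s, 0 < A s) (hBpos : ∀ s, 0 < B s)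
    (Ω : Set E2) (hΩ : IsOpen Ω)
    (m₁ m₂ p ρ : E2 → ℝ)
    (hm₁ : ContDiffOn ℝ 1 m₁ Ω) (hm₂ : ContDiffOn ℝ 1 m₂ Ω)
    (hpc : ContDiffOn ℝ 1 p Ω) (hρc : ContDiffOn ℝ 1 ρ Ω)
    (hρpos : ∀ x ∈ Ω, 0 < ρ x)
    (heuler : EulerEqs γ Ω m₁ m₂ p ρ)
    (ψ : E2 → ℝ) (hψ : ContDiffOn ℝ 2 ψ Ω)
    (hstream₁ : ∀ x ∈ Ω, pd 0 ψ x = -m₂ x)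
    (hstream₂ : ∀ x ∈ Ω, pd 1 ψ x = m₁ x)
    (hnz : ∀ x ∈ Ω, (pd 0 ψ x, pd 1 ψ x) ≠ (0, 0))
    (hpres : ∀ x ∈ Ω, p x = ((γ - 1) / γ) * A (ψ x) * ρ x ^ γ)
    (hbern : ∀ x ∈ Ω,
      (m₁ x ^ 2 + m₂ x ^ 2) / (2 * ρ x ^ 2) + γ * p x / ((γ - 1) * ρ x) = B (ψ x))
    (hbranch : ∀ x ∈ Ω, 2 * B (ψ x) / ((γ + 1) * A (ψ x)) < ρ x ^ (γ - 1)) :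
    ∀ x ∈ Ω, NonDivEq γ A B ψ (ρ x) x := by
  intro x hx
  have hxΩ : Ω ∈ nhds x := hΩ.mem_nhds hx
  have dm1 : DifferentiableAt ℝ m₁ x := (hm₁.contDiffAt hxΩ).differentiableAt one_ne_zero
  have dm2 : DifferentiableAt ℝ m₂ x := (hm₂.contDiffAt hxΩ).differentiableAt one_ne_zero
  have dp : DifferentiableAt ℝ p x := (hpc.contDiffAt hxΩ).differentiableAt one_ne_zero
  have dρ : DifferentiableAt ℝ ρ x := (hρc.contDiffAt hxΩ).differentiableAt one_ne_zero
  have dψ : DifferentiableAt ℝ ψ x := (hψ.contDiffAt hxΩ).differentiableAt two_ne_zero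
  have dA : DifferentiableAt ℝ A (ψ x) := (hA.differentiable one_ne_zero).differentiableAt
  have dB : DifferentiableAt ℝ B (ψ x) := (hB.differentiable one_ne_zero).differentiableAt
  have hrpos : 0 < ρ x := hρpos x hx
  have hr : ρ x ≠ 0 := hrpos.ne'
  have hγ0 : γ ≠ 0 := by linarith
  have hγ1 : γ - 1 ≠ 0 := by linarith
  have hγ1' : (0:ℝ) < γ - 1 := by linarith
  have hqpos : 0 < (m₁ x)^2 + (m₂ x)^2 := by
    rcases (lt_or_eq_of_le (by positivity : (0:ℝ) ≤ (m₁ x)^2 + (m₂ x)^2)) with h | h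
    · exact h
    · exfalso
      have h1 : m₁ x = 0 ∧ m₂ x = 0 := by constructor <;> nlinarith
      exact hnz x hx (by rw [hstream₁ x hx, hstream₂ x hx, h1.1, h1.2]; simp)
  have hrg : ρ x ^ γ = ρ x ^ (γ - 1) * ρ x := by
    nth_rewrite 1 [show γ = (γ - 1) + 1 by ring]
    rw [Real.rpow_add_one hr]
  have hrg1 : ρ x ^ (γ + 1) = ρ x ^ (γ - 1) * ρ x ^ 2 := by
    rw [show γ + 1 = (γ - 1) + 2 by ring, Real.rpow_add hrpos,
      show (2:ℝ) = ((2:ℕ):ℝ) by norm_num, Real.rpow_natCast]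
  have hrg3 : ρ x ^ (γ + 3) = ρ x ^ (γ - 1) * ρ x ^ 4 := by
    rw [show γ + 3 = (γ - 1) + 4 by ring, Real.rpow_add hrpos,
      show (4:ℝ) = ((4:ℕ):ℝ) by norm_num, Real.rpow_natCast]
  -- second derivatives of ψ in terms of m
  have hev0 : pd 0 ψ =ᶠ[nhds x] (fun y => -m₂ y) :=
    Filter.eventuallyEq_of_mem hxΩ (fun y hy => hstream₁ y hy)
  have hev1 : pd 1 ψ =ᶠ[nhds x] m₁ :=
    Filter.eventuallyEq_of_mem hxΩ (fun y hy => hstream₂ y hy)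
  have h00 : pd 0 (pd 0 ψ) x = -(pd 0 m₂ x) := by rw [pd_congr hev0, pd_neg]
  have h10 : pd 1 (pd 0 ψ) x = -(pd 1 m₂ x) := by rw [pd_congr hev0, pd_neg]
  have h01 : pd 0 (pd 1 ψ) x = pd 0 m₁ x := pd_congr hev1
  have h11 : pd 1 (pd 1 ψ) x = pd 1 m₁ x := pd_congr hev1
  -- momentum equations, cleared
  have F2 : 2*(m₁ x)*(pd 0 m₁ x)*(ρ x) - (m₁ x)^2*(pd 0 ρ x) + ((pd 1 m₁ x)*(m₂ x) + (m₁ x)*(pd 1 m₂ x))*(ρ x) - (m₁ x)*(m₂ x)*(pd 1 ρ x) + (ρ x)^2*(pd 0 p x) = 0 := by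
    have e := (heuler x hx).2.1
    rw [pd_div (dm1.fun_pow 2) dρ hr, pd_div (dm1.fun_mul dm2) dρ hr, pd_sq dm1, pd_mul dm1 dm2] at e
    field_simp at e
    linear_combination e
  have F3 : ((pd 0 m₁ x)*(m₂ x) + (m₁ x)*(pd 0 m₂ x))*(ρ x) - (m₁ x)*(m₂ x)*(pd 0 ρ x) + 2*(m₂ x)*(pd 1 m₂ x)*(ρ x) - (m₂ x)^2*(pd 1 ρ x) + (ρ x)^2*(pd 1 p x) = 0 := by
    have e := (heuler x hx).2.2.1
    rw [pd_div (dm1.fun_mul dm2) dρ hr, pd_div (dm2.fun_pow 2) dρ hr, pd_sq dm2, pd_mul dm1 dm2] at e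
    field_simp at e
    linear_combination e
  -- pressure relation, pointwise and differentiated
  have dAψ : DifferentiableAt ℝ (fun y => A (ψ y)) x := dA.comp x dψ
  have dBψ : DifferentiableAt ℝ (fun y => B (ψ y)) x := dB.comp x dψ
  have dρg : DifferentiableAt ℝ (fun y => ρ y ^ γ) x := dρ.rpow_const (Or.inl hr)
  have hpev : p =ᶠ[nhds x] (fun y => ((γ - 1) / γ) * A (ψ y) * ρ y ^ γ) :=
    Filter.eventuallyEq_of_mem hxΩ (fun y hy => hpres y hy)
  have FP : γ*(p x) - (γ-1)*(A (ψ x))*(ρ x ^ (γ - 1))*(ρ x) = 0 := by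
    have h := hpres x hx
    rw [hrg] at h
    field_simp at h
    linear_combination h
  have hpev' : (fun y => γ * p y) =ᶠ[nhds x] (fun y => (γ - 1) * (A (ψ y) * ρ y ^ γ)) :=
    Filter.eventuallyEq_of_mem hxΩ (fun y hy => by rw [hpres y hy]; field_simp)
  have F4 : γ*(pd 0 p x) + (γ-1)*(deriv A (ψ x))*(m₂ x)*(ρ x ^ (γ - 1))*(ρ x) - γ*(γ-1)*(A (ψ x))*(ρ x ^ (γ - 1))*(pd 0 ρ x) = 0 := by
    have h : pd 0 (fun y => γ * p y) x
        = pd 0 (fun y => (γ - 1) * (A (ψ y) * ρ y ^ γ)) x := pd_congr hpev'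
    rw [pd_const_mul γ dp, pd_const_mul (γ - 1) (dAψ.fun_mul dρg), pd_mul dAψ dρg,
      pd_comp A dA dψ, pd_rpow γ dρ hr, hstream₁ x hx, hrg] at h
    linear_combination h
  have F5 : γ*(pd 1 p x) - (γ-1)*(deriv A (ψ x))*(m₁ x)*(ρ x ^ (γ - 1))*(ρ x) - γ*(γ-1)*(A (ψ x))*(ρ x ^ (γ - 1))*(pd 1 ρ x) = 0 := by
    have h : pd 1 (fun y => γ * p y) x
        = pd 1 (fun y => (γ - 1) * (A (ψ y) * ρ y ^ γ)) x := pd_congr hpev'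
    rw [pd_const_mul γ dp, pd_const_mul (γ - 1) (dAψ.fun_mul dρg), pd_mul dAψ dρg,
      pd_comp A dA dψ, pd_rpow γ dρ hr, hstream₂ x hx, hrg] at h
    linear_combination h
  -- Bernoulli relation, pointwise and differentiated
  have FQ : (γ-1)*((m₁ x)^2+(m₂ x)^2) + 2*γ*(p x)*(ρ x) - 2*(γ-1)*(B (ψ x))*(ρ x)^2 = 0 := by
    have h := hbern x hx
    field_simp at h
    apply mul_left_cancel₀ hr
    linear_combination ρ x * h
  have hbev : (fun y => (m₁ y ^ 2 + m₂ y ^ 2) / (2 * ρ y ^ 2) + γ * p y / ((γ - 1) * ρ y))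
      =ᶠ[nhds x] (fun y => B (ψ y)) :=
    Filter.eventuallyEq_of_mem hxΩ (fun y hy => hbern y hy)
  have dnum : DifferentiableAt ℝ (fun y => m₁ y ^ 2 + m₂ y ^ 2) x := (dm1.pow 2).add (dm2.pow 2)
  have dden1 : DifferentiableAt ℝ (fun y => 2 * ρ y ^ 2) x := (dρ.pow 2).const_mul 2
  have hden1 : 2 * ρ x ^ 2 ≠ 0 := by positivity
  have dden2 : DifferentiableAt ℝ (fun y => (γ - 1) * ρ y) x := dρ.const_mul _
  have hden2 : (γ - 1) * ρ x ≠ 0 := mul_ne_zero hγ1 hr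
  have dq1 : DifferentiableAt ℝ (fun y => (m₁ y ^ 2 + m₂ y ^ 2) / (2 * ρ y ^ 2)) x :=
    DifferentiableAt.div'' dnum dden1 hden1
  have dq2 : DifferentiableAt ℝ (fun y => γ * p y / ((γ - 1) * ρ y)) x :=
    DifferentiableAt.div'' (dp.const_mul γ) dden2 hden2
  have F6 : (γ-1)*((m₁ x)*(pd 0 m₁ x)+(m₂ x)*(pd 0 m₂ x))*(ρ x) - (γ-1)*((m₁ x)^2+(m₂ x)^2)*(pd 0 ρ x) + γ*(pd 0 p x)*(ρ x)^2 - γ*(p x)*(ρ x)*(pd 0 ρ x) + (γ-1)*(deriv B (ψ x))*(m₂ x)*(ρ x)^3 = 0 := by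
    have h : pd 0 (fun y => (m₁ y ^ 2 + m₂ y ^ 2) / (2 * ρ y ^ 2)
        + γ * p y / ((γ - 1) * ρ y)) x = pd 0 (fun y => B (ψ y)) x := pd_congr hbev
    rw [pd_add dq1 dq2, pd_div dnum dden1 hden1, pd_div (dp.const_mul γ) dden2 hden2,
      pd_add (dm1.fun_pow 2) (dm2.fun_pow 2), pd_sq dm1, pd_sq dm2, pd_const_mul 2 (dρ.fun_pow 2),
      pd_sq dρ, pd_const_mul γ dp, pd_const_mul (γ - 1) dρ, pd_comp B dB dψ,
      hstream₁ x hx] at h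
    field_simp at h
    apply mul_left_cancel₀ (mul_ne_zero (mul_ne_zero (by norm_num : (4:ℝ) ≠ 0) hγ1)
      (pow_ne_zero 3 hr))
    linear_combination (4 * (γ - 1) * ρ x ^ 3) * h
  have F7 : (γ-1)*((m₁ x)*(pd 1 m₁ x)+(m₂ x)*(pd 1 m₂ x))*(ρ x) - (γ-1)*((m₁ x)^2+(m₂ x)^2)*(pd 1 ρ x) + γ*(pd 1 p x)*(ρ x)^2 - γ*(p x)*(ρ x)*(pd 1 ρ x) - (γ-1)*(deriv B (ψ x))*(m₁ x)*(ρ x)^3 = 0 := by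
    have h : pd 1 (fun y => (m₁ y ^ 2 + m₂ y ^ 2) / (2 * ρ y ^ 2)
        + γ * p y / ((γ - 1) * ρ y)) x = pd 1 (fun y => B (ψ y)) x := pd_congr hbev
    rw [pd_add dq1 dq2, pd_div dnum dden1 hden1, pd_div (dp.const_mul γ) dden2 hden2,
      pd_add (dm1.fun_pow 2) (dm2.fun_pow 2), pd_sq dm1, pd_sq dm2, pd_const_mul 2 (dρ.fun_pow 2),
      pd_sq dρ, pd_const_mul γ dp, pd_const_mul (γ - 1) dρ, pd_comp B dB dψ,
      hstream₂ x hx] at h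
    field_simp at h
    apply mul_left_cancel₀ (mul_ne_zero (mul_ne_zero (by norm_num : (4:ℝ) ≠ 0) hγ1)
      (pow_ne_zero 3 hr))
    linear_combination (4 * (γ - 1) * ρ x ^ 3) * h
  -- the key polynomial identity
  have key : ((γ - 1) * ((m₁ x)^2 + (m₂ x)^2) * (ρ x)) * (γ * (((γ-1)*(A (ψ x))*(ρ x ^ (γ - 1))*(ρ x)^2 - (m₁ x)^2)*(-(pd 0 m₂ x)) + (-(m₂ x)*(m₁ x))*((pd 0 m₁ x) - (pd 1 m₂ x)) + ((γ-1)*(A (ψ x))*(ρ x ^ (γ - 1))*(ρ x)^2 - (m₂ x)^2)*(pd 1 m₁ x)))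
      = ((γ - 1) * ((m₁ x)^2 + (m₂ x)^2) * (ρ x)) * ((γ-1)*(ρ x ^ (γ - 1))*(ρ x)^4*(γ*(A (ψ x))*(deriv B (ψ x)) - 2*(deriv A (ψ x))*(B (ψ x)) + (A (ψ x))*(deriv A (ψ x))*(ρ x ^ (γ - 1)))) := by
    linear_combination γ*(γ-1)*(A (ψ x))*(ρ x ^ (γ - 1))*(ρ x)^2*(m₁ x) * F7 - γ*(γ-1)*(A (ψ x))*(ρ x ^ (γ - 1))*(ρ x)^2*(m₂ x) * F6 - γ*(γ-1)*(A (ψ x))*(ρ x ^ (γ - 1))*(ρ x)^2*(γ-1)*(m₁ x) * F3 + γ*(γ-1)*(A (ψ x))*(ρ x ^ (γ - 1))*(ρ x)^2*(γ-1)*(m₂ x) * F2 + (ρ x)^2*((γ-1)*((m₁ x)^2 + (m₂ x)^2) + γ*(p x)*(ρ x))*(m₂ x) * F4 - (ρ x)^2*((γ-1)*((m₁ x)^2 + (m₂ x)^2) + γ*(p x)*(ρ x))*(m₁ x) * F5 + γ*(γ-1)*((m₁ x)^2 + (m₂ x)^2)*(m₁ x) * F3 - γ*(γ-1)*((m₁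 x)^2 + (m₂ x)^2)*(m₂ x) * F2 + (-γ*(ρ x)^3*((m₂ x)*(pd 0 p x) - (m₁ x)*(pd 1 p x))) * FP + (-(γ-1)*((m₁ x)^2 + (m₂ x)^2)*(ρ x ^ (γ - 1))*(ρ x)^3*(deriv A (ψ x))) * FQ + ((γ-1)*((m₁ x)^2 + (m₂ x)^2)*(ρ x ^ (γ - 1))*(ρ x)^4*(deriv A (ψ x))) * FP
  have hne : ((γ - 1) * ((m₁ x)^2 + (m₂ x)^2) * (ρ x)) ≠ 0 := by positivity
  have key2 := mul_left_cancel₀ hne key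
  -- unfold the goal and conclude
  unfold NonDivEq
  rw [h00, h10, h01, h11, hstream₁ x hx, hstream₂ x hx, hrg1, hrg3]
  field_simp
  linear_combination key2
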